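/- arXiv:2101.07233 — 2 statements merged into one kernel-verified Lean document; each statement's English description precedes it below -/
import Mathlib

section
/- Suppose μ ∈ (0, F*] and the strictly feasible flow f is 1/1000-centered for path parameter μ. Then ‖R(f)^{1/2} (f − f(μ))‖_∞ ≤ 1/10, i.e. r(f)_e^{1/2} · |f_e − f(μ)_e| ≤ 1/10 for every edge e. -/
open Matrix

/-- The four Penrose conditions characterizing the Moore–Penrose pseudoinverse. -/
def IsMoorePenrose {n : Type*} [Fintype n] (M Md : Matrix n n ℝ) : Prop :=
  M * Md * M = M ∧ Md * M * Md = Md ∧ (M * Md)ᵀ = M * Md ∧ (Md * M)ᵀ = Md * M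

/-- Resistances induced by a flow: `r(f)_e = u⁺(f)_e⁻² + u⁻(f)_e⁻²`. -/
noncomputable def resist {E : Type*} (u f : E → ℝ) (e : E) : ℝ :=
  ((u e - f e) ^ 2)⁻¹ + ((u e + f e) ^ 2)⁻¹

/-- The Laplacian `L(f) = Bᵀ R(f)⁻¹ B` induced by the resistances of `f`. -/
noncomputable def lapOf {V E : Type*} [Fintype V] [Fintype E] [DecidableEq E]
    (B : Matrix E V ℝ) (u f : E → ℝ) : Matrix V V ℝ :=
  Bᵀ * Matrix.diagonal (fun e => (resist u f e)⁻¹) * B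

/-- KKT characterization of the central path flow with parameter `μ`. -/
def IsCentralFlow {V E : Type*} [Fintype V] [Fintype E]
    (B : Matrix E V ℝ) (u : E → ℝ) (χst : V → ℝ) (Fstar μ : ℝ) (f : E → ℝ) : Prop :=
  (∀ e, |f e| < u e) ∧ Bᵀ *ᵥ f = (Fstar - μ) • χst ∧
    ∃ φ : V → ℝ, ∀ e, (B *ᵥ φ) e = (u e - f e)⁻¹ - (u e + f e)⁻¹

/-- `f` is `γ`-centered for path parameter `μ`:
`‖Bᵀf − (F*−μ)χ_{st}‖_{L(f)†} ≤ γ` and there is `φ` with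
`‖Bφ − (1/u⁺(f) − 1/u⁻(f))‖_{R(f)⁻¹} ≤ γ`, where `L(f)†` is the Moore–Penrose
pseudoinverse of `L(f)` (specified by the Penrose conditions). -/
noncomputable def IsCenteredFlow {V E : Type*} [Fintype V] [Fintype E] [DecidableEq V]
    [DecidableEq E] (B : Matrix E V ℝ) (u : E → ℝ) (χst : V → ℝ)
    (Fstar γ μ : ℝ) (f : E → ℝ) : Prop :=
  ∃ Ld : Matrix V V ℝ, IsMoorePenrose (lapOf B u f) Ld ∧
    Real.sqrt ((Bᵀ *ᵥ f - (Fstar - μ) • χst) ⬝ᵥ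
        (Ld *ᵥ (Bᵀ *ᵥ f - (Fstar - μ) • χst))) ≤ γ ∧
    ∃ φ : V → ℝ,
      Real.sqrt (∑ e, (resist u f e)⁻¹ *
          ((B *ᵥ φ) e - ((u e - f e)⁻¹ - (u e + f e)⁻¹)) ^ 2) ≤ γ

set_option maxHeartbeats 1000000

section helperlemmas

lemma csSum {ι : Type*} [Fintype ι] (x y : ι → ℝ) :
    ∑ i, x i * y i ≤ Real.sqrt (∑ i, x i ^ 2) * Real.sqrt (∑ i, y i ^ 2) := by
  have h := Finset.sum_mul_sq_le_sq_mul_sq Finset.univ x y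
  have h1 : (0:ℝ) ≤ ∑ i, x i ^ 2 := Finset.sum_nonneg fun i _ => sq_nonneg _
  calc ∑ i, x i * y i ≤ |∑ i, x i * y i| := le_abs_self _
    _ = Real.sqrt ((∑ i, x i * y i)^2) := (Real.sqrt_sq_eq_abs _).symm
    _ ≤ Real.sqrt ((∑ i, x i ^ 2) * ∑ i, y i ^ 2) := Real.sqrt_le_sqrt h
    _ = _ := Real.sqrt_mul h1 _

lemma csSumW {ι : Type*} [Fintype ι] (w x y : ι → ℝ) (hw : ∀ i, 0 ≤ w i) :
    ∑ i, w i * (x i * y i) ≤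
      Real.sqrt (∑ i, w i * x i ^ 2) * Real.sqrt (∑ i, w i * y i ^ 2) := by
  have key := csSum (fun i => Real.sqrt (w i) * x i) (fun i => Real.sqrt (w i) * y i)
  have e1 : ∀ i : ι, (Real.sqrt (w i) * x i) * (Real.sqrt (w i) * y i) = w i * (x i * y i) := by
    intro i
    rw [mul_mul_mul_comm, Real.mul_self_sqrt (hw i)]
  have e2 : ∀ i : ι, (Real.sqrt (w i) * x i) ^ 2 = w i * x i ^ 2 := by
    intro i; rw [mul_pow, Real.sq_sqrt (hw i)]
  have e3 : ∀ i : ι, (Real.sqrt (w i) * y i) ^ 2 = w i * y i ^ 2 := by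
    intro i; rw [mul_pow, Real.sq_sqrt (hw i)]
  simp_rw [e1, e2, e3] at key
  exact key

lemma minkW {ι : Type*} [Fintype ι] (w x y : ι → ℝ) (hw : ∀ i, 0 ≤ w i) :
    Real.sqrt (∑ i, w i * (x i + y i) ^ 2) ≤
      Real.sqrt (∑ i, w i * x i ^ 2) + Real.sqrt (∑ i, w i * y i ^ 2) := by
  set X := ∑ i, w i * x i ^ 2 with hX
  set Y := ∑ i, w i * y i ^ 2 with hY
  have hX0 : 0 ≤ X := Finset.sum_nonneg fun i _ => mul_nonneg (hw i) (sq_nonneg _)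
  have hY0 : 0 ≤ Y := Finset.sum_nonneg fun i _ => mul_nonneg (hw i) (sq_nonneg _)
  have hcs : ∑ i, w i * (x i * y i) ≤ Real.sqrt X * Real.sqrt Y := csSumW w x y hw
  have hexp : ∑ i, w i * (x i + y i) ^ 2 = X + 2 * ∑ i, w i * (x i * y i) + Y := by
    rw [hX, hY, Finset.mul_sum, ← Finset.sum_add_distrib, ← Finset.sum_add_distrib]
    apply Finset.sum_congr rfl
    intro i _; ring
  have hle : ∑ i, w i * (x i + y i) ^ 2 ≤ (Real.sqrt X + Real.sqrt Y) ^ 2 := by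
    rw [hexp, add_sq, Real.sq_sqrt hX0, Real.sq_sqrt hY0]
    nlinarith [hcs]
  calc Real.sqrt (∑ i, w i * (x i + y i) ^ 2) ≤ Real.sqrt ((Real.sqrt X + Real.sqrt Y) ^ 2) :=
        Real.sqrt_le_sqrt hle
    _ = Real.sqrt X + Real.sqrt Y := by
        rw [Real.sqrt_sq (by positivity)]

lemma sqrtAdd (a b : ℝ) (ha : 0 ≤ a) (hb : 0 ≤ b) :
    Real.sqrt (a + b) ≤ Real.sqrt a + Real.sqrt b := by
  have h : a + b ≤ (Real.sqrt a + Real.sqrt b) ^ 2 := by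
    rw [add_sq, Real.sq_sqrt ha, Real.sq_sqrt hb]
    nlinarith [Real.sqrt_nonneg a, Real.sqrt_nonneg b]
  calc Real.sqrt (a + b) ≤ Real.sqrt ((Real.sqrt a + Real.sqrt b) ^ 2) := Real.sqrt_le_sqrt h
    _ = _ := Real.sqrt_sq (by positivity)

lemma edge_core (a b x S r t p : ℝ) (ha : 0 < a) (hb : 0 < b) (ha' : 0 < a + x)
    (hb' : 0 < b - x) (hS : S = (a * (a + x))⁻¹ + (b * (b - x))⁻¹)
    (hr : r = (a ^ 2)⁻¹ + (b ^ 2)⁻¹) (ht : t = Real.sqrt r * |x|) (hp : p = x ^ 2 * S) :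
    0 ≤ p ∧ r * x ^ 2 ≤ 2 * p + 4 * p ^ 2 ∧ r⁻¹ * (x * S) ^ 2 ≤ 2 * p + 4 * p ^ 2 := by
  have hSpos : 0 < S := by rw [hS]; positivity
  have hrpos : 0 < r := by rw [hr]; positivity
  have hp0 : 0 ≤ p := by rw [hp]; positivity
  have ht0 : 0 ≤ t := by rw [ht]; positivity
  have hsra : a⁻¹ ≤ Real.sqrt r := by
    have h1 : (a ^ 2)⁻¹ ≤ r := by rw [hr]; nlinarith [sq_nonneg b⁻¹, inv_pos.mpr (pow_pos hb 2)]
    calc a⁻¹ = Real.sqrt ((a ^ 2)⁻¹) := by rw [Real.sqrt_inv, Real.sqrt_sq ha.le]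
      _ ≤ Real.sqrt r := Real.sqrt_le_sqrt h1
  have hsrb : b⁻¹ ≤ Real.sqrt r := by
    have h1 : (b ^ 2)⁻¹ ≤ r := by rw [hr]; nlinarith [inv_pos.mpr (pow_pos ha 2)]
    calc b⁻¹ = Real.sqrt ((b ^ 2)⁻¹) := by rw [Real.sqrt_inv, Real.sqrt_sq hb.le]
      _ ≤ Real.sqrt r := Real.sqrt_le_sqrt h1
  have hta : |x| ≤ t * a := by
    rw [ht]
    calc |x| = a⁻¹ * |x| * a := by field_simp
      _ ≤ Real.sqrt r * |x| * a :=
          mul_le_mul_of_nonneg_right (mul_le_mul_of_nonneg_right hsra (abs_nonneg x)) ha.le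
  have htb : |x| ≤ t * b := by
    rw [ht]
    calc |x| = b⁻¹ * |x| * b := by field_simp
      _ ≤ Real.sqrt r * |x| * b :=
          mul_le_mul_of_nonneg_right (mul_le_mul_of_nonneg_right hsrb (abs_nonneg x)) hb.le
  have hxle : x ≤ |x| := le_abs_self x
  have hxge : -x ≤ |x| := neg_le_abs x
  have ht2 : t ^ 2 = r * x ^ 2 := by
    rw [ht, mul_pow, Real.sq_sqrt hrpos.le, sq_abs]
  have key1 : r ≤ S * (1 + t) := by
    have e1 : (a ^ 2)⁻¹ ≤ (a * (a + x))⁻¹ * (1 + t) := by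
      rw [inv_eq_one_div, inv_eq_one_div, div_mul_eq_mul_div,
        div_le_div_iff₀ (by positivity) (by positivity)]
      nlinarith [mul_le_mul_of_nonneg_left hta ha.le]
    have e2 : (b ^ 2)⁻¹ ≤ (b * (b - x))⁻¹ * (1 + t) := by
      rw [inv_eq_one_div, inv_eq_one_div, div_mul_eq_mul_div,
        div_le_div_iff₀ (by positivity) (by positivity)]
      nlinarith [mul_le_mul_of_nonneg_left htb hb.le]
    calc r = (a ^ 2)⁻¹ + (b ^ 2)⁻¹ := hr
      _ ≤ (a * (a + x))⁻¹ * (1 + t) + (b * (b - x))⁻¹ * (1 + t) := add_le_add e1 e2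
      _ = S * (1 + t) := by rw [hS]; ring
  have hself : t ^ 2 ≤ p * (1 + t) := by
    rw [ht2, hp]
    calc r * x ^ 2 ≤ S * (1 + t) * x ^ 2 := mul_le_mul_of_nonneg_right key1 (sq_nonneg x)
      _ = x ^ 2 * S * (1 + t) := by ring
  have tbound : t ^ 2 ≤ 2 * p + 4 * p ^ 2 := by
    rcases le_or_gt t 1 with hcase | hcase
    · nlinarith
    · have ht1 : 0 < t := lt_trans one_pos hcase
      have h3 : t ≤ 2 * p := by
        have h2 : t * t ≤ (2 * p) * t := by nlinarith
        exact le_of_mul_le_mul_right h2 ht1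
      nlinarith
  refine ⟨hp0, by rw [← ht2]; exact tbound, ?_⟩
  rcases le_or_gt t (1 / 2) with hcase | hcase
  · have key2 : S ≤ 2 * r := by
      have e1 : (a * (a + x))⁻¹ ≤ (a ^ 2)⁻¹ * 2 := by
        rw [inv_eq_one_div, inv_eq_one_div, div_mul_eq_mul_div,
          div_le_div_iff₀ (by positivity) (by positivity)]
        have hta' : t * a ≤ a / 2 := by nlinarith
        nlinarith [mul_le_mul_of_nonneg_left (le_trans hta hta') ha.le]
      have e2 : (b * (b - x))⁻¹ ≤ (b ^ 2)⁻¹ * 2 := by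
        rw [inv_eq_one_div, inv_eq_one_div, div_mul_eq_mul_div,
          div_le_div_iff₀ (by positivity) (by positivity)]
        have htb' : t * b ≤ b / 2 := by nlinarith
        nlinarith [mul_le_mul_of_nonneg_left (le_trans htb htb') hb.le]
      calc S = (a * (a + x))⁻¹ + (b * (b - x))⁻¹ := hS
        _ ≤ (a ^ 2)⁻¹ * 2 + (b ^ 2)⁻¹ * 2 := add_le_add e1 e2
        _ = 2 * r := by rw [hr]; ring
    have hSr : S * r⁻¹ ≤ 2 := by
      have h1 : S * r⁻¹ ≤ 2 * r * r⁻¹ :=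
        mul_le_mul_of_nonneg_right key2 (inv_nonneg.mpr hrpos.le)
      rwa [mul_assoc, mul_inv_cancel₀ hrpos.ne', mul_one] at h1
    have hmain : r⁻¹ * (x * S) ^ 2 ≤ 2 * p := by
      have expand : r⁻¹ * (x * S) ^ 2 = (x ^ 2 * S) * (S * r⁻¹) := by ring
      rw [expand, ← hp]
      calc p * (S * r⁻¹) ≤ p * 2 := mul_le_mul_of_nonneg_left hSr hp0
        _ = 2 * p := by ring
    nlinarith [sq_nonneg p]
  · have hqt : (r⁻¹ * (x * S) ^ 2) * t ^ 2 = p ^ 2 := by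
      rw [ht2, hp]
      field_simp
    have hq0 : 0 ≤ r⁻¹ * (x * S) ^ 2 := by positivity
    have ht14 : (1:ℝ)/4 ≤ t ^ 2 := by nlinarith
    have hmain : r⁻¹ * (x * S) ^ 2 ≤ 4 * p ^ 2 := by
      nlinarith [mul_le_mul_of_nonneg_left ht14 hq0]
    nlinarith

/-- Per-edge bounds in the form used by the main theorem.
`a = u - f`, `b = u + f`, `x = f - fμ`, so `a + x = u - fμ`, `b - x = u + fμ`. -/
lemma edge_wrap (a b x : ℝ) (ha : 0 < a) (hb : 0 < b) (ha' : 0 < a + x) (hb' : 0 < b - x) :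
    0 ≤ (a⁻¹ - b⁻¹ - ((a + x)⁻¹ - (b - x)⁻¹)) * x ∧
    ((a ^ 2)⁻¹ + (b ^ 2)⁻¹) * x ^ 2 ≤
      2 * ((a⁻¹ - b⁻¹ - ((a + x)⁻¹ - (b - x)⁻¹)) * x) +
      4 * ((a⁻¹ - b⁻¹ - ((a + x)⁻¹ - (b - x)⁻¹)) * x) ^ 2 ∧
    ((a ^ 2)⁻¹ + (b ^ 2)⁻¹)⁻¹ * (a⁻¹ - b⁻¹ - ((a + x)⁻¹ - (b - x)⁻¹)) ^ 2 ≤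
      2 * ((a⁻¹ - b⁻¹ - ((a + x)⁻¹ - (b - x)⁻¹)) * x) +
      4 * ((a⁻¹ - b⁻¹ - ((a + x)⁻¹ - (b - x)⁻¹)) * x) ^ 2 := by
  have hgd : a⁻¹ - b⁻¹ - ((a + x)⁻¹ - (b - x)⁻¹) = x * ((a * (a + x))⁻¹ + (b * (b - x))⁻¹) := by
    field_simp
    ring
  obtain ⟨h1, h2, h3⟩ := edge_core a b x ((a * (a + x))⁻¹ + (b * (b - x))⁻¹)
    ((a ^ 2)⁻¹ + (b ^ 2)⁻¹) (Real.sqrt ((a ^ 2)⁻¹ + (b ^ 2)⁻¹) * |x|)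
    (x ^ 2 * ((a * (a + x))⁻¹ + (b * (b - x))⁻¹)) ha hb ha' hb' rfl rfl rfl rfl
  have hq : (a⁻¹ - b⁻¹ - ((a + x)⁻¹ - (b - x)⁻¹)) * x
      = x ^ 2 * ((a * (a + x))⁻¹ + (b * (b - x))⁻¹) := by rw [hgd]; ring
  rw [hq, hgd]
  refine ⟨h1, h2, ?_⟩
  have : (x * ((a * (a + x))⁻¹ + (b * (b - x))⁻¹)) ^ 2
      = (x * ((a * (a + x))⁻¹ + (b * (b - x))⁻¹)) ^ 2 := rfl
  exact h3

lemma quad_expand {V E : Type*} [Fintype V] [Fintype E] [DecidableEq E]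
    (B : Matrix E V ℝ) (w : E → ℝ) (ψ z : V → ℝ) :
    ψ ⬝ᵥ ((Bᵀ * Matrix.diagonal w * B) *ᵥ z) = ∑ e, w e * ((B *ᵥ ψ) e * (B *ᵥ z) e) := by
  rw [Matrix.mul_assoc, ← Matrix.mulVec_mulVec, Matrix.dotProduct_mulVec,
    Matrix.vecMul_transpose, ← Matrix.mulVec_mulVec]
  simp only [dotProduct, Matrix.mulVec_diagonal]
  exact Finset.sum_congr rfl fun e _ => by ring

lemma lap_symm {V E : Type*} [Fintype V] [Fintype E] [DecidableEq E]
    (B : Matrix E V ℝ) (w : E → ℝ) :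
    (Bᵀ * Matrix.diagonal w * B)ᵀ = Bᵀ * Matrix.diagonal w * B := by
  rw [Matrix.transpose_mul, Matrix.transpose_mul, Matrix.transpose_transpose,
    Matrix.diagonal_transpose, Matrix.mul_assoc]

lemma exists_preimage {V E : Type*} [Fintype V] [Fintype E] [DecidableEq V] [DecidableEq E]
    (B : Matrix E V ℝ) (w : E → ℝ) (hw : ∀ e, 0 < w e) (h : E → ℝ) :
    ∃ z : V → ℝ, (Bᵀ * Matrix.diagonal w * B) *ᵥ z = Bᵀ *ᵥ h := by
  classical
  set M : Matrix V V ℝ := Bᵀ * Matrix.diagonal w * B with hM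
  set C : Matrix E V ℝ := Matrix.diagonal (fun e => Real.sqrt (w e)) * B with hC
  have hws : (fun e => Real.sqrt (w e) * Real.sqrt (w e)) = w :=
    funext fun e => Real.mul_self_sqrt (hw e).le
  have hCC : Cᵀ * C = M := by
    rw [hC, hM, Matrix.transpose_mul, Matrix.diagonal_transpose, Matrix.mul_assoc,
      ← Matrix.mul_assoc (Matrix.diagonal _) (Matrix.diagonal _) B,
      Matrix.diagonal_mul_diagonal, hws, Matrix.mul_assoc]
  have hker : LinearMap.ker C.mulVecLin = LinearMap.ker B.mulVecLin := by
    ext x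
    simp only [LinearMap.mem_ker, Matrix.mulVecLin_apply]
    constructor
    · intro hx
      have hze : ∀ e, Real.sqrt (w e) * (B *ᵥ x) e = 0 := by
        intro e
        have := congrFun hx e
        rwa [hC, ← Matrix.mulVec_mulVec, Matrix.mulVec_diagonal] at this
      funext e
      have hsw : Real.sqrt (w e) ≠ 0 := ne_of_gt (Real.sqrt_pos.mpr (hw e))
      exact (mul_eq_zero.mp (hze e)).resolve_left hsw
    · intro hx
      rw [hC, ← Matrix.mulVec_mulVec, hx, Matrix.mulVec_zero]
  have hle : LinearMap.range M.mulVecLin ≤ LinearMap.range Bᵀ.mulVecLin := by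
    rintro y ⟨z, rfl⟩
    exact ⟨(Matrix.diagonal w * B) *ᵥ z, by
      rw [Matrix.mulVecLin_apply, Matrix.mulVecLin_apply, Matrix.mulVec_mulVec, hM,
        Matrix.mul_assoc]⟩
  have hrankC : C.rank = B.rank := by
    have h1 := LinearMap.finrank_range_add_finrank_ker C.mulVecLin
    have h2 := LinearMap.finrank_range_add_finrank_ker B.mulVecLin
    rw [hker] at h1
    unfold Matrix.rank
    omega
  have hrankM : M.rank = Bᵀ.rank := by
    rw [← hCC, Matrix.rank_transpose_mul_self, hrankC, Matrix.rank_transpose]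
  have hrange : LinearMap.range M.mulVecLin = LinearMap.range Bᵀ.mulVecLin :=
    Submodule.eq_of_le_of_finrank_le hle (le_of_eq hrankM.symm)
  have hmem : Bᵀ *ᵥ h ∈ LinearMap.range M.mulVecLin := by
    rw [hrange]
    exact ⟨h, rfl⟩
  obtain ⟨z, hz⟩ := hmem
  exact ⟨z, hz⟩

end helperlemmas

/-- Lemma `recentererror`: if a strictly feasible flow `f` is
`1/1000`-centered for path parameter `μ`, then `‖R(f)^{1/2}(f − f(μ))‖_∞ ≤ 1/10`. -/
theorem centered_implies_linf_close {V E : Type*} [Fintype V] [Fintype E] [DecidableEq V]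
    [DecidableEq E]
    (head tail : E → V) (s t : V) (hst : s ≠ t)
    (u : E → ℝ) (hu : ∀ e, 0 < u e)
    (B : Matrix E V ℝ)
    (hB : ∀ e v, B e v = (if v = head e then (1 : ℝ) else 0) - (if v = tail e then 1 else 0))
    (χst : V → ℝ)
    (hχ : χst = fun v => (if v = t then (1 : ℝ) else 0) - (if v = s then 1 else 0))
    (hconn : ∀ x : V → ℝ, (∀ e, x (head e) = x (tail e)) → ∀ v w : V, x v = x w)
    (Fstar : ℝ)
    (hFstar : IsGreatest
      {F : ℝ | ∃ f : E → ℝ, (∀ e, |f e| ≤ u e) ∧ Bᵀ *ᵥ f = F • χst} Fstar)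
    (μ : ℝ) (hμ0 : 0 < μ) (hμF : μ ≤ Fstar)
    (fμ : E → ℝ) (hfμ : IsCentralFlow B u χst Fstar μ fμ)
    (f : E → ℝ) (hfeas : ∀ e, |f e| < u e)
    (hcent : IsCenteredFlow B u χst Fstar (1 / 1000) μ f) :
    ∀ e : E, Real.sqrt (resist u f e) * |f e - fμ e| ≤ 1 / 10 := by
  classical
  obtain ⟨Ld, hMP, hd, φ, hφ⟩ := hcent
  obtain ⟨hfeasμ, hdivμ, φμ, hφμ⟩ := hfμ
  -- positivity facts
  have haf : ∀ e, 0 < u e - f e := fun e => sub_pos.mpr (abs_lt.mp (hfeas e)).2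
  have hbf : ∀ e, 0 < u e + f e := fun e => by have := (abs_lt.mp (hfeas e)).1; linarith
  have hafμ : ∀ e, 0 < u e - fμ e := fun e => sub_pos.mpr (abs_lt.mp (hfeasμ e)).2
  have hbfμ : ∀ e, 0 < u e + fμ e := fun e => by have := (abs_lt.mp (hfeasμ e)).1; linarith
  have hrpos : ∀ e, 0 < resist u f e := fun e =>
    add_pos (inv_pos.mpr (pow_pos (haf e) 2)) (inv_pos.mpr (pow_pos (hbf e) 2))
  -- abbreviations (as plain functions, all definitional)
  let w : E → ℝ := fun e => (resist u f e)⁻¹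
  let g : E → ℝ := fun e => (u e - f e)⁻¹ - (u e + f e)⁻¹
  let gm : E → ℝ := fun e => (u e - fμ e)⁻¹ - (u e + fμ e)⁻¹
  let hh : E → ℝ := fun e => f e - fμ e
  let p : E → ℝ := fun e => (g e - gm e) * hh e
  have hw : ∀ e, 0 < w e := fun e => inv_pos.mpr (hrpos e)
  -- edge bounds
  have edgeB : ∀ e, 0 ≤ p e ∧ resist u f e * hh e ^ 2 ≤ 2 * p e + 4 * p e ^ 2 ∧
      w e * (g e - gm e) ^ 2 ≤ 2 * p e + 4 * p e ^ 2 := by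
    intro e
    have h1 := edge_wrap (u e - f e) (u e + f e) (f e - fμ e) (haf e) (hbf e)
      (by have := hafμ e; linarith) (by have := hbfμ e; linarith)
    have ea : u e - f e + (f e - fμ e) = u e - fμ e := by ring
    have eb : u e + f e - (f e - fμ e) = u e + fμ e := by ring
    rw [ea, eb] at h1
    exact h1
  have hp0 : ∀ e, 0 ≤ p e := fun e => (edgeB e).1
  have hP0 : (0:ℝ) ≤ ∑ e, p e := Finset.sum_nonneg fun e _ => hp0 e
  -- divergence vector and preimage
  have hdvec : Bᵀ *ᵥ f - (Fstar - μ) • χst = Bᵀ *ᵥ hh := by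
    have h0 : hh = f - fμ := rfl
    rw [h0, Matrix.mulVec_sub, hdivμ]
  obtain ⟨z, hz⟩ := exists_preimage B w hw hh
  have hMsym : (Bᵀ * Matrix.diagonal w * B)ᵀ = Bᵀ * Matrix.diagonal w * B := lap_symm B w
  have hvm : ∀ (x : V → ℝ), x ᵥ* (Bᵀ * Matrix.diagonal w * B)
      = (Bᵀ * Matrix.diagonal w * B) *ᵥ x := by
    intro x
    rw [← hMsym, Matrix.vecMul_transpose, hMsym]
  -- quadratic identity for z
  have hzq : ∑ e, w e * ((B *ᵥ z) e * (B *ᵥ z) e)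
      = (Bᵀ *ᵥ f - (Fstar - μ) • χst) ⬝ᵥ (Ld *ᵥ (Bᵀ *ᵥ f - (Fstar - μ) • χst)) := by
    have hdotM : ∀ y : V → ℝ, ((Bᵀ * Matrix.diagonal w * B) *ᵥ z) ⬝ᵥ y
        = z ⬝ᵥ ((Bᵀ * Matrix.diagonal w * B) *ᵥ y) := by
      intro y
      rw [Matrix.dotProduct_mulVec, hvm]
    rw [hdvec, ← hz]
    rw [hdotM (Ld *ᵥ ((Bᵀ * Matrix.diagonal w * B) *ᵥ z)), Matrix.mulVec_mulVec,
      Matrix.mulVec_mulVec]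
    have hPen : Bᵀ * Matrix.diagonal w * B * Ld * (Bᵀ * Matrix.diagonal w * B)
        = Bᵀ * Matrix.diagonal w * B := hMP.1
    rw [hPen]
    exact (quad_expand B w z z).symm
  have hzsum0 : (0:ℝ) ≤ ∑ e, w e * ((B *ᵥ z) e * (B *ᵥ z) e) :=
    Finset.sum_nonneg fun e _ => mul_nonneg (hw e).le (mul_self_nonneg _)
  have hzsum : ∑ e, w e * ((B *ᵥ z) e * (B *ᵥ z) e) ≤ (1/1000)^2 := by
    have h1 : Real.sqrt (∑ e, w e * ((B *ᵥ z) e * (B *ᵥ z) e)) ≤ 1/1000 := by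
      rw [hzq]; exact hd
    calc ∑ e, w e * ((B *ᵥ z) e * (B *ᵥ z) e)
        = (Real.sqrt (∑ e, w e * ((B *ᵥ z) e * (B *ᵥ z) e)))^2 := (Real.sq_sqrt hzsum0).symm
      _ ≤ (1/1000)^2 := pow_le_pow_left₀ (Real.sqrt_nonneg _) h1 2
  have hzsqrt : Real.sqrt (∑ e, w e * ((B *ᵥ z) e)^2) ≤ 1/1000 := by
    have he : ∑ e, w e * ((B *ᵥ z) e)^2 = ∑ e, w e * ((B *ᵥ z) e * (B *ᵥ z) e) := by
      apply Finset.sum_congr rfl; intro e _; ring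
    rw [he, hzq]; exact hd
  -- dual bound
  have hφsqrt : Real.sqrt (∑ e, w e * ((B *ᵥ φ) e - g e)^2) ≤ 1/1000 := hφ
  -- T1 bound
  have hwr : ∀ e, Real.sqrt (w e) * Real.sqrt (resist u f e) = 1 := by
    intro e
    have : Real.sqrt (w e) = (Real.sqrt (resist u f e))⁻¹ := Real.sqrt_inv _
    rw [this]
    exact inv_mul_cancel₀ (ne_of_gt (Real.sqrt_pos.mpr (hrpos e)))
  have hT1 : ∑ e, (g e - (B *ᵥ φ) e) * hh e
      ≤ (1/1000) * Real.sqrt (∑ e, resist u f e * hh e ^ 2) := by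
    have key := csSum (fun e => Real.sqrt (w e) * (g e - (B *ᵥ φ) e))
      (fun e => Real.sqrt (resist u f e) * hh e)
    have e1 : ∀ e, (Real.sqrt (w e) * (g e - (B *ᵥ φ) e)) * (Real.sqrt (resist u f e) * hh e)
        = (g e - (B *ᵥ φ) e) * hh e := by
      intro e
      rw [mul_mul_mul_comm, hwr e, one_mul]
    have e2 : ∀ e, (Real.sqrt (w e) * (g e - (B *ᵥ φ) e))^2 = w e * ((B *ᵥ φ) e - g e)^2 := by
      intro e
      rw [mul_pow, Real.sq_sqrt (hw e).le]
      ring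
    have e3 : ∀ e, (Real.sqrt (resist u f e) * hh e)^2 = resist u f e * hh e ^ 2 := by
      intro e
      rw [mul_pow, Real.sq_sqrt (hrpos e).le]
    simp_rw [e1, e2, e3] at key
    calc ∑ e, (g e - (B *ᵥ φ) e) * hh e
        ≤ Real.sqrt (∑ e, w e * ((B *ᵥ φ) e - g e)^2)
          * Real.sqrt (∑ e, resist u f e * hh e ^ 2) := key
      _ ≤ (1/1000) * Real.sqrt (∑ e, resist u f e * hh e ^ 2) :=
          mul_le_mul_of_nonneg_right hφsqrt (Real.sqrt_nonneg _)
  -- T2 bound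
  have hT2 : ∑ e, ((B *ᵥ φ) e - gm e) * hh e
      ≤ ((1/1000) + Real.sqrt (∑ e, w e * (g e - gm e)^2)) * (1/1000) := by
    have step1 : ∑ e, ((B *ᵥ φ) e - gm e) * hh e = (B *ᵥ (φ - φμ)) ⬝ᵥ hh := by
      rw [Matrix.mulVec_sub]
      apply Finset.sum_congr rfl
      intro e _
      rw [Pi.sub_apply, hφμ e]
    have step2 : (B *ᵥ (φ - φμ)) ⬝ᵥ hh = (φ - φμ) ⬝ᵥ (Bᵀ *ᵥ hh) := by
      rw [Matrix.dotProduct_mulVec, Matrix.vecMul_transpose]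
    have step3 : (φ - φμ) ⬝ᵥ (Bᵀ *ᵥ hh)
        = ∑ e, w e * ((B *ᵥ (φ - φμ)) e * (B *ᵥ z) e) := by
      rw [← hz]
      exact quad_expand B w (φ - φμ) z
    have step4 : ∑ e, w e * ((B *ᵥ (φ - φμ)) e * (B *ᵥ z) e)
        ≤ Real.sqrt (∑ e, w e * ((B *ᵥ (φ - φμ)) e)^2)
          * Real.sqrt (∑ e, w e * ((B *ᵥ z) e)^2) :=
      csSumW w _ _ (fun e => (hw e).le)
    have step5 : Real.sqrt (∑ e, w e * ((B *ᵥ (φ - φμ)) e)^2)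
        ≤ (1/1000) + Real.sqrt (∑ e, w e * (g e - gm e)^2) := by
      have hdecomp : ∀ e, (B *ᵥ (φ - φμ)) e = ((B *ᵥ φ) e - g e) + (g e - gm e) := by
        intro e
        rw [Matrix.mulVec_sub, Pi.sub_apply, hφμ e]
        ring
      have := minkW w (fun e => (B *ᵥ φ) e - g e) (fun e => g e - gm e) (fun e => (hw e).le)
      simp_rw [← hdecomp] at this
      exact le_trans this (add_le_add_left hφsqrt _)
    calc ∑ e, ((B *ᵥ φ) e - gm e) * hh e
        = ∑ e, w e * ((B *ᵥ (φ - φμ)) e * (B *ᵥ z) e) := by rw [step1, step2, step3]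
      _ ≤ Real.sqrt (∑ e, w e * ((B *ᵥ (φ - φμ)) e)^2)
          * Real.sqrt (∑ e, w e * ((B *ᵥ z) e)^2) := step4
      _ ≤ ((1/1000) + Real.sqrt (∑ e, w e * (g e - gm e)^2)) * (1/1000) :=
          mul_le_mul step5 hzsqrt (Real.sqrt_nonneg _)
            (by positivity)
  -- combine : P ≤ ...
  have hsplit : ∑ e, p e = (∑ e, (g e - (B *ᵥ φ) e) * hh e)
      + ∑ e, ((B *ᵥ φ) e - gm e) * hh e := by
    rw [← Finset.sum_add_distrib]
    apply Finset.sum_congr rfl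
    intro e _
    show (g e - gm e) * hh e = _
    ring
  have hPle : ∑ e, p e ≤ (1/1000) * Real.sqrt (∑ e, resist u f e * hh e ^ 2)
      + ((1/1000) + Real.sqrt (∑ e, w e * (g e - gm e)^2)) * (1/1000) := by
    rw [hsplit]; exact add_le_add hT1 hT2
  -- sum-squared bounds
  have hsq : ∑ e, p e ^ 2 ≤ (∑ e, p e) ^ 2 := by
    calc ∑ e, p e ^ 2 ≤ ∑ e, p e * (∑ e', p e') := by
          apply Finset.sum_le_sum
          intro e _
          have hle := Finset.single_le_sum (f := p) (fun i _ => hp0 i) (Finset.mem_univ e)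
          nlinarith [hp0 e]
      _ = (∑ e, p e) * (∑ e, p e) := by rw [← Finset.sum_mul]
      _ = (∑ e, p e) ^ 2 := by ring
  have hA2 : ∑ e, resist u f e * hh e ^ 2 ≤ 2 * (∑ e, p e) + 4 * (∑ e, p e)^2 := by
    calc ∑ e, resist u f e * hh e ^ 2 ≤ ∑ e, (2 * p e + 4 * p e ^ 2) :=
          Finset.sum_le_sum fun e _ => (edgeB e).2.1
      _ = 2 * (∑ e, p e) + 4 * (∑ e, p e ^ 2) := by
          rw [Finset.sum_add_distrib, ← Finset.mul_sum, ← Finset.mul_sum]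
      _ ≤ 2 * (∑ e, p e) + 4 * (∑ e, p e)^2 := by linarith [hsq]
  have hQ2 : ∑ e, w e * (g e - gm e)^2 ≤ 2 * (∑ e, p e) + 4 * (∑ e, p e)^2 := by
    calc ∑ e, w e * (g e - gm e)^2 ≤ ∑ e, (2 * p e + 4 * p e ^ 2) :=
          Finset.sum_le_sum fun e _ => (edgeB e).2.2
      _ = 2 * (∑ e, p e) + 4 * (∑ e, p e ^ 2) := by
          rw [Finset.sum_add_distrib, ← Finset.mul_sum, ← Finset.mul_sum]
      _ ≤ 2 * (∑ e, p e) + 4 * (∑ e, p e)^2 := by linarith [hsq]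
  -- sqrt bounds
  have hsqrt_bound : ∀ X : ℝ, X ≤ 2 * (∑ e, p e) + 4 * (∑ e, p e)^2 →
      Real.sqrt X ≤ Real.sqrt 2 * Real.sqrt (∑ e, p e) + 2 * (∑ e, p e) := by
    intro X hX
    calc Real.sqrt X ≤ Real.sqrt (2 * (∑ e, p e) + 4 * (∑ e, p e)^2) := Real.sqrt_le_sqrt hX
      _ ≤ Real.sqrt (2 * (∑ e, p e)) + Real.sqrt (4 * (∑ e, p e)^2) :=
          sqrtAdd _ _ (by positivity) (by positivity)
      _ = Real.sqrt 2 * Real.sqrt (∑ e, p e) + 2 * (∑ e, p e) := by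
          rw [Real.sqrt_mul (by norm_num) (∑ e, p e)]
          congr 1
          rw [show 4 * (∑ e, p e)^2 = (2 * (∑ e, p e))^2 by ring,
            Real.sqrt_sq (by positivity)]
  have hAbound := hsqrt_bound _ hA2
  have hQbound := hsqrt_bound _ hQ2
  -- numeric endgame
  have hy0 : 0 ≤ Real.sqrt (∑ e, p e) := Real.sqrt_nonneg _
  have hyy : (Real.sqrt (∑ e, p e))^2 = ∑ e, p e := Real.sq_sqrt hP0
  have hs2 : Real.sqrt 2 ≤ 1.5 := by
    have h1 : Real.sqrt 2 ≤ Real.sqrt (1.5^2) := Real.sqrt_le_sqrt (by norm_num)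
    rwa [Real.sqrt_sq (by norm_num)] at h1
  have hfinal : ∑ e, p e ≤ 1/250 := by
    set y := Real.sqrt (∑ e, p e) with hy
    set P := ∑ e, p e with hPP
    have key : P ≤ (1/1000) * (Real.sqrt 2 * y + 2 * P)
        + ((1/1000) + (Real.sqrt 2 * y + 2 * P)) * (1/1000) := by
      refine le_trans hPle ?_
      have m1 : Real.sqrt (∑ e, resist u f e * hh e ^ 2) ≤ Real.sqrt 2 * y + 2 * P := hAbound
      have m2 : Real.sqrt (∑ e, w e * (g e - gm e)^2) ≤ Real.sqrt 2 * y + 2 * P := hQbound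
      have hAnn : (0:ℝ) ≤ Real.sqrt (∑ e, resist u f e * hh e ^ 2) := Real.sqrt_nonneg _
      nlinarith [m1, m2]
    have key2 : y^2 ≤ (1/1000) * (1.5 * y + 2 * y^2)
        + ((1/1000) + (1.5 * y + 2 * y^2)) * (1/1000) := by
      rw [hyy]
      nlinarith [key, hs2, hy0, hP0, Real.sqrt_nonneg 2]
    rw [← hyy]
    rcases le_or_gt y (1/16) with hc | hc
    · nlinarith
    · nlinarith
  -- conclusion
  intro e0
  have h1 := (edgeB e0).2.1
  have h2 : p e0 ≤ ∑ e, p e := Finset.single_le_sum (fun i _ => hp0 i) (Finset.mem_univ e0)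
  have hbound : resist u f e0 * (f e0 - fμ e0) ^ 2 ≤ 1/100 := by
    have hppp := hp0 e0
    have h1' : resist u f e0 * (f e0 - fμ e0) ^ 2 ≤ 2 * p e0 + 4 * p e0 ^ 2 := h1
    nlinarith [mul_self_le_mul_self (hp0 e0) h2, hfinal, hP0, h1']
  have heq : Real.sqrt (resist u f e0) * |f e0 - fμ e0|
      = Real.sqrt (resist u f e0 * (f e0 - fμ e0)^2) := by
    rw [Real.sqrt_mul (hrpos e0).le, Real.sqrt_sq_eq_abs]
  rw [heq]
  calc Real.sqrt (resist u f e0 * (f e0 - fμ e0)^2) ≤ Real.sqrt (1/100) :=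
        Real.sqrt_le_sqrt hbound
    _ = 1/10 := by
        rw [show (1:ℝ)/100 = (1/10)^2 by norm_num, Real.sqrt_sq (by norm_num)]
end

section
/- Let f be a strictly feasible flow, let f̃ ∈ ℝ^E, let e be an edge, and let 0 < ε < 1/2 satisfy r(f)_e^{1/2} · |f_e − f̃_e| ≤ ε. Then |f̃_e| < u_e (so r(f̃)_e is defined), and (1 + ε)^{−2} · r(f)_e ≤ r(f̃)_e ≤ (1 − ε)^{−2} · r(f)_e. -/
private lemma inv_sq_mono {x y : ℝ} (hx : 0 < x) (hxy : x ≤ y) :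
    (y ^ 2)⁻¹ ≤ (x ^ 2)⁻¹ := by
  apply inv_anti₀ (by positivity)
  exact pow_le_pow_left₀ hx.le hxy 2

/-- if `f` is strictly feasible and `r(f)_e^{1/2} |f_e − f̃_e| ≤ ε` for
some `0 < ε < 1/2`, then `|f̃_e| < u_e` and
`(1+ε)⁻² r(f)_e ≤ r(f̃)_e ≤ (1−ε)⁻² r(f)_e`. -/
theorem resistance_multiplicative_stability {E : Type*} [Fintype E]
    (u : E → ℝ) (hu : ∀ e, 0 < u e)
    (f : E → ℝ) (hfeas : ∀ e, |f e| < u e)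
    (ft : E → ℝ) (e : E)
    (ε : ℝ) (hε0 : 0 < ε) (hε : ε < 1 / 2)
    (h : Real.sqrt (resist u f e) * |f e - ft e| ≤ ε) :
    |ft e| < u e ∧
      ((1 + ε) ^ 2)⁻¹ * resist u f e ≤ resist u ft e ∧
      resist u ft e ≤ ((1 - ε) ^ 2)⁻¹ * resist u f e := by
  have hfe := abs_lt.mp (hfeas e)
  set a := u e - f e with ha
  set b := u e + f e with hb
  have ha0 : 0 < a := by simp only [ha]; linarith [hfe.2]
  have hb0 : 0 < b := by simp only [hb]; linarith [hfe.1]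
  have hr : resist u f e = (a ^ 2)⁻¹ + (b ^ 2)⁻¹ := rfl
  have hra : (a ^ 2)⁻¹ ≤ resist u f e := by
    rw [hr]; have : (0:ℝ) ≤ (b ^ 2)⁻¹ := by positivity
    linarith
  have hrb : (b ^ 2)⁻¹ ≤ resist u f e := by
    rw [hr]; have : (0:ℝ) ≤ (a ^ 2)⁻¹ := by positivity
    linarith
  have hsra : a⁻¹ ≤ Real.sqrt (resist u f e) := by
    have : Real.sqrt ((a ^ 2)⁻¹) = a⁻¹ := by
      rw [Real.sqrt_inv, Real.sqrt_sq ha0.le]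
    rw [← this]; exact Real.sqrt_le_sqrt hra
  have hsrb : b⁻¹ ≤ Real.sqrt (resist u f e) := by
    have : Real.sqrt ((b ^ 2)⁻¹) = b⁻¹ := by
      rw [Real.sqrt_inv, Real.sqrt_sq hb0.le]
    rw [← this]; exact Real.sqrt_le_sqrt hrb
  set d := |f e - ft e| with hd
  have hd0 : 0 ≤ d := abs_nonneg _
  have hda : d ≤ ε * a := by
    have h1 : a⁻¹ * d ≤ ε :=
      le_trans (mul_le_mul_of_nonneg_right hsra hd0) h
    nlinarith [mul_inv_cancel₀ ha0.ne']
  have hdb : d ≤ ε * b := by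
    have h1 : b⁻¹ * d ≤ ε :=
      le_trans (mul_le_mul_of_nonneg_right hsrb hd0) h
    nlinarith [mul_inv_cancel₀ hb0.ne']
  have hdiff1 : f e - ft e ≤ d := le_abs_self _
  have hdiff2 : -d ≤ f e - ft e := neg_abs_le _
  set at' := u e - ft e with hat
  set bt := u e + ft e with hbt
  have hat1 : (1 - ε) * a ≤ at' := by
    simp only [hat, ha] at *; nlinarith
  have hat2 : at' ≤ (1 + ε) * a := by
    simp only [hat, ha] at *; nlinarith
  have hbt1 : (1 - ε) * b ≤ bt := by
    simp only [hbt, hb] at *; nlinarith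
  have hbt2 : bt ≤ (1 + ε) * b := by
    simp only [hbt, hb] at *; nlinarith
  have hεa : 0 < (1 - ε) * a := mul_pos (by linarith) ha0
  have hεb : 0 < (1 - ε) * b := mul_pos (by linarith) hb0
  have hat0 : 0 < at' := lt_of_lt_of_le hεa hat1
  have hbt0 : 0 < bt := lt_of_lt_of_le hεb hbt1
  have hrt : resist u ft e = (at' ^ 2)⁻¹ + (bt ^ 2)⁻¹ := rfl
  refine ⟨abs_lt.mpr ⟨by simp only [hbt] at hbt0; linarith,
      by simp only [hat] at hat0; linarith⟩, ?_, ?_⟩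
  · have k1 : (((1 + ε) * a) ^ 2)⁻¹ ≤ (at' ^ 2)⁻¹ := inv_sq_mono hat0 hat2
    have k2 : (((1 + ε) * b) ^ 2)⁻¹ ≤ (bt ^ 2)⁻¹ := inv_sq_mono hbt0 hbt2
    have e1 : (((1 + ε) * a) ^ 2)⁻¹ = ((1 + ε) ^ 2)⁻¹ * (a ^ 2)⁻¹ := by
      rw [mul_pow, mul_inv]
    have e2 : (((1 + ε) * b) ^ 2)⁻¹ = ((1 + ε) ^ 2)⁻¹ * (b ^ 2)⁻¹ := by
      rw [mul_pow, mul_inv]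
    rw [hr, hrt, mul_add]
    rw [e1] at k1; rw [e2] at k2
    linarith
  · have k1 : (at' ^ 2)⁻¹ ≤ (((1 - ε) * a) ^ 2)⁻¹ := inv_sq_mono hεa hat1
    have k2 : (bt ^ 2)⁻¹ ≤ (((1 - ε) * b) ^ 2)⁻¹ := inv_sq_mono hεb hbt1
    have e1 : (((1 - ε) * a) ^ 2)⁻¹ = ((1 - ε) ^ 2)⁻¹ * (a ^ 2)⁻¹ := by
      rw [mul_pow, mul_inv]
    have e2 : (((1 - ε) * b) ^ 2)⁻¹ = ((1 - ε) ^ 2)⁻¹ * (b ^ 2)⁻¹ := by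
      rw [mul_pow, mul_inv]
    rw [hr, hrt, mul_add]
    rw [e1] at k1; rw [e2] at k2
    linarith
end
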